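/- arXiv:2404.15652 — 3 statements merged into one kernel-verified Lean document; each statement's English description precedes it below -/
import Mathlib

section
/- Let X be a connected graph, g an automorphism of X, and A a set of vertices with g·A = A (setwise). Suppose x is a vertex with d(x,A) ≥ 1 and suppose that some geodesic from a vertex a ∈ A realizing d(x,A) to x contains an edge [e₁,e₂] (traversed in this order from a to x) such that g·e₂ = e₁. Then d(g·x, A) < d(x, A). -/
/-- If an automorphism g stabilises A setwise and folds an edge of a geodesic from A to x
(i.e. g·e₂ = e₁ for an edge [e₁,e₂] of a geodesic from a point of A realising d(x,A) to x),
then d(g·x, A) < d(x, A). -/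
theorem rotate_closer {V : Type*} (G : SimpleGraph V) (hG : G.Connected)
    (g : G ≃g G) (A : Set V) (hA : (⇑g) '' A = A)
    (x : V) (hx : 1 ≤ sInf ((fun z => G.dist x z) '' A))
    (a : V) (ha : a ∈ A) (hreal : G.dist a x = sInf ((fun z => G.dist x z) '' A))
    (w : G.Walk a x) (hw : w.length = G.dist a x)
    (e₁ e₂ : V) (hadj : G.Adj e₁ e₂)
    (w₁ : G.Walk a e₁) (w₂ : G.Walk e₂ x)
    (hdec : w = w₁.append (SimpleGraph.Walk.cons hadj w₂))
    (hge : g e₂ = e₁) :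
    sInf ((fun z => G.dist (g x) z) '' A) < sInf ((fun z => G.dist x z) '' A) := by
  -- length equation
  have hlen : w₁.length + (w₂.length + 1) = G.dist a x := by
    rw [← hw, hdec];
    simp [SimpleGraph.Walk.length_append]
  -- walk from e₁ to g x
  have hw2' : G.dist e₁ (g x) ≤ w₂.length := by
    have := SimpleGraph.dist_le (w₂.map g.toHom)
    rw [SimpleGraph.Walk.length_map] at this
    exact hge ▸ this
  have h1 : G.dist a e₁ ≤ w₁.length := SimpleGraph.dist_le w₁
  have htri : G.dist a (g x) ≤ G.dist a e₁ + G.dist e₁ (g x) :=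
    hG.dist_triangle
  have hlt : G.dist a (g x) < G.dist a x := by omega
  have hmem : G.dist (g x) a ∈ (fun z => G.dist (g x) z) '' A := ⟨a, ha, rfl⟩
  calc sInf ((fun z => G.dist (g x) z) '' A) ≤ G.dist (g x) a := Nat.sInf_le hmem
    _ = G.dist a (g x) := SimpleGraph.dist_comm
    _ < G.dist a x := hlt
    _ = _ := hreal
end

section
/- A retract of a residually finite group is separable: let G be a residually finite group and ρ : G → G a homomorphism with ρ∘ρ = ρ, and let H = ρ(G) be its image. Then for every g ∈ G with g ∉ H, there exists a finite group Q and a homomorphism φ : G → Q such that φ(g) ∉ φ(H). -/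
/-- A retract of a residually finite group is separable. -/
theorem retract_separable {G : Type*} [Group G]
    (hrf : ∀ x : G, x ≠ 1 → ∃ (Q : Type) (_ : Group Q) (_ : Finite Q) (φ : G →* Q), φ x ≠ 1)
    (ρ : G →* G) (hρ : ρ.comp ρ = ρ) (g : G) (hg : g ∉ ρ.range) :
    ∃ (Q : Type) (_ : Group Q) (_ : Finite Q) (φ : G →* Q),
      φ g ∉ φ '' (ρ.range : Set G) := by
  have hne : g * (ρ g)⁻¹ ≠ 1 := by
    intro h
    apply hg
    have : g = ρ g := by
      rw [mul_inv_eq_one] at h; exact h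
    exact ⟨g, this.symm⟩
  obtain ⟨Q, _, _, ψ, hψ⟩ := hrf _ hne
  refine ⟨Q × Q, inferInstance, inferInstance, ψ.prod (ψ.comp ρ), ?_⟩
  rintro ⟨h, ⟨k, rfl⟩, heq⟩
  have hfix : ρ (ρ k) = ρ k := by
    have := DFunLike.congr_fun hρ k
    simpa using this
  simp only [MonoidHom.prod_apply, MonoidHom.comp_apply, Prod.mk.injEq, hfix] at heq
  apply hψ
  rw [map_mul, map_inv, ← heq.1, ← heq.2, mul_inv_cancel]
end

section
/- A virtual retract of a residually finite group is separable: let G be a residually finite group, K ≤ G a finite-index subgroup, and ρ : K → K an idempotent endomorphism with image H = ρ(K). Then for every g ∈ G with g ∉ H, there exists a finite group Q and a homomorphism φ : G → Q such that φ(g) ∉ φ(H). -/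
/-- Separate `g` from a subset of a finite-index subgroup via a finite quotient. -/
theorem aux_sep {G : Type*} [Group G] (L : Subgroup G) (hL : L.FiniteIndex)
    (S : Set G) (hS : S ⊆ L) (g : G) (hg : g ∉ L) :
    ∃ (Q : Type) (_ : Group Q) (_ : Finite Q) (φ : G →* Q), φ g ∉ φ '' S := by
  haveI := hL
  haveI : L.normalCore.FiniteIndex := inferInstance
  haveI : Finite (G ⧸ L.normalCore) := Subgroup.finite_quotient_of_finiteIndex
  haveI : Small.{0} (G ⧸ L.normalCore) := Countable.toSmall _
  haveI : Finite (Shrink (G ⧸ L.normalCore)) :=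
    Finite.of_equiv _ (equivShrink (G ⧸ L.normalCore))
  let e : (G ⧸ L.normalCore) ≃* Shrink (G ⧸ L.normalCore) :=
    { equivShrink (G ⧸ L.normalCore) with map_mul' := fun x y => equivShrink_mul x y }
  refine ⟨Shrink (G ⧸ L.normalCore), inferInstance, inferInstance,
    e.toMonoidHom.comp (QuotientGroup.mk' _), ?_⟩
  rintro ⟨h, hh, heq⟩
  apply hg
  have heq' : QuotientGroup.mk' L.normalCore h = QuotientGroup.mk' L.normalCore g :=
    e.injective heq
  obtain ⟨z, hz, hzz⟩ := (QuotientGroup.mk'_eq_mk' _).mp heq'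
  have : h * z ∈ L := L.mul_mem (hS hh) (L.normalCore_le hz)
  rwa [hzz] at this

/-- A virtual retract of a residually finite group is separable. -/
theorem virtual_retract_separable {G : Type*} [Group G]
    (hrf : ∀ x : G, x ≠ 1 → ∃ (Q : Type) (_ : Group Q) (_ : Finite Q) (φ : G →* Q), φ x ≠ 1)
    (K : Subgroup G) (hK : K.FiniteIndex) (ρ : K →* K) (hρ : ρ.comp ρ = ρ)
    (g : G) (hg : g ∉ Subgroup.map K.subtype ρ.range) :
    ∃ (Q : Type) (_ : Group Q) (_ : Finite Q) (φ : G →* Q),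
      φ g ∉ φ '' ((Subgroup.map K.subtype ρ.range : Subgroup G) : Set G) := by
  haveI := hK
  set H : Subgroup G := Subgroup.map K.subtype ρ.range with hH
  have hHK : (H : Set G) ⊆ K := by
    rintro x ⟨y, _, rfl⟩
    exact y.2
  by_cases hgK : g ∈ K
  · -- g ∈ K but g ∉ H
    set g' : K := ⟨g, hgK⟩ with hg'
    have hne : g * (↑(ρ g'))⁻¹ ≠ 1 := by
      intro h
      apply hg
      have : g = ↑(ρ g') := by
        rw [mul_inv_eq_one] at h
        exact h
      exact ⟨ρ g', ⟨g', rfl⟩, this.symm⟩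
    obtain ⟨Q₀, _, _, ψ, hψ⟩ := hrf _ hne
    haveI : Finite Q₀ := ‹_›
    -- two homomorphisms K → Q₀
    set A : K →* Q₀ := ψ.comp K.subtype with hA
    set B : K →* Q₀ := ψ.comp (K.subtype.comp ρ) with hB
    set L' : Subgroup K := A.eqLocus B with hL'
    set L : Subgroup G := L'.map K.subtype with hL
    -- L has finite index
    haveI : Finite A.range := Set.toFinite _
    haveI : Finite B.range := Set.toFinite _
    have hker : A.ker ⊓ B.ker ≤ L' := by
      rintro x ⟨hx1, hx2⟩
      show A x = B x
      rw [hx1, hx2]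
    haveI : (A.ker ⊓ B.ker).FiniteIndex := inferInstance
    haveI hL'fi : L'.FiniteIndex := Subgroup.finiteIndex_of_le hker
    have hLfi : L.FiniteIndex := by
      constructor
      rw [hL, Subgroup.index_map_subtype]
      exact Nat.mul_ne_zero hL'fi.index_ne_zero hK.index_ne_zero
    -- H ⊆ L
    have hHL : (H : Set G) ⊆ L := by
      rintro x ⟨y, ⟨z, rfl⟩, rfl⟩
      refine ⟨ρ z, ?_, rfl⟩
      show A (ρ z) = B (ρ z)
      have : ρ (ρ z) = ρ z := by
        have := congrArg (fun f => f z) hρ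
        simpa using this
      simp [hA, hB, this]
    -- g ∉ L
    have hgL : g ∉ L := by
      rintro ⟨y, hy, hyg⟩
      have hy' : y = g' := Subtype.ext (by rw [hg']; simpa using hyg)
      apply hψ
      have : A y = B y := hy
      rw [hy'] at this
      have hAB : ψ g = ψ (↑(ρ g')) := this
      simp [map_mul, hAB]
    exact aux_sep L hLfi _ hHL g hgL
  · exact aux_sep K hK _ hHK g hgK
end
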